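/- arXiv:2006.15338 — 8 statements merged into one kernel-verified Lean document; each statement's English description precedes it below -/
import Mathlib

section
/- Let L be a meet-semilattice with least element 0. If F is an ultrafilter in L, e ∈ F, and {e_1, …, e_m} is a tight cover of e, then e_i ∈ F for some i. (This is the meet-semilattice case of the statement 'in an inverse semigroup every ultrafilter is a tight filter', to which the general case is reduced.) -/
/-- A filter in a meet-semilattice with bottom: a nonempty, upward-closed subset
closed under binary meets. -/
def IsLatFilter {L : Type*} [SemilatticeInf L] [OrderBot L] (F : Set L) : Prop :=
  F.Nonempty ∧ (∀ a ∈ F, ∀ b : L, a ≤ b → b ∈ F) ∧ (∀ a ∈ F, ∀ b ∈ F, a ⊓ b ∈ F)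

/-- An ultrafilter: a proper filter maximal under inclusion among proper filters. -/
def IsLatUltrafilter {L : Type*} [SemilatticeInf L] [OrderBot L] (F : Set L) : Prop :=
  IsLatFilter F ∧ (⊥ : L) ∉ F ∧
    ∀ G : Set L, IsLatFilter G → (⊥ : L) ∉ G → F ⊆ G → G = F

/-- In a meet-semilattice with least element `⊥` (written `0`), if `F` is an
ultrafilter, `e ∈ F`, and `{e_1, …, e_m}` is a tight cover of `e`, then some
`e_i` belongs to `F`. -/
theorem stmt_3 {L : Type*} [SemilatticeInf L] [OrderBot L]
    (F : Set L) (hF : IsLatUltrafilter F) (e : L) (he : e ∈ F)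
    (E : Finset L) (hle : ∀ a ∈ E, a ≤ e)
    (htight : ∀ x : L, ⊥ < x → x ≤ e → ∃ a ∈ E, x ⊓ a ≠ ⊥) :
    ∃ a ∈ E, a ∈ F := by
  obtain ⟨⟨hne, hup, hinf⟩, hbot, hmax⟩ := hF
  by_contra h
  push_neg at h
  -- key: for a ∉ F there is f ∈ F with f ⊓ a = ⊥
  have key : ∀ a ∈ E, ∃ f ∈ F, f ⊓ a = ⊥ := by
    intro a haE
    by_contra hk
    push_neg at hk
    set G : Set L := {b | ∃ f ∈ F, f ⊓ a ≤ b} with hG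
    have hFG : F ⊆ G := fun f hf => ⟨f, hf, inf_le_left⟩
    have haG : a ∈ G := by
      obtain ⟨f, hf⟩ := hne
      exact ⟨f, hf, inf_le_right⟩
    have hGfil : IsLatFilter G := by
      refine ⟨⟨a, haG⟩, ?_, ?_⟩
      · rintro b ⟨f, hf, hle'⟩ c hbc
        exact ⟨f, hf, hle'.trans hbc⟩
      · rintro b ⟨f, hf, hfb⟩ c ⟨g, hg, hgc⟩
        refine ⟨f ⊓ g, hinf f hf g hg, le_inf ?_ ?_⟩
        · exact le_trans (inf_le_inf_right a (inf_le_left)) hfb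
        · exact le_trans (inf_le_inf_right a (inf_le_right)) hgc
    have hGbot : (⊥ : L) ∉ G := by
      rintro ⟨f, hf, hle'⟩
      exact hk f hf (le_bot_iff.mp hle')
    have := hmax G hGfil hGbot hFG
    exact h a haE (this ▸ haG)
  choose f hfF hfa using key
  -- E is nonempty, since e > ⊥ (else ⊥ ∈ F)
  have hepos : (⊥ : L) < e := by
    rcases eq_bot_or_bot_lt e with h0 | h0
    · exact absurd (h0 ▸ he) hbot
    · exact h0
  obtain ⟨a0, ha0, _⟩ := htight e hepos le_rfl
  have hEne : E.attach.Nonempty := Finset.attach_nonempty_iff.mpr ⟨a0, ha0⟩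
  -- the finite meet of the f's with e
  set g : L := e ⊓ E.attach.inf' hEne (fun a => f a.1 a.2) with hg
  have hgF : g ∈ F := by
    have : E.attach.inf' hEne (fun a => f a.1 a.2) ∈ F := by
      refine Finset.Nonempty.cons_induction ?_ ?_ hEne
      · intro a; simpa using hfF a.1 a.2
      · intro a s has hs ih
        rw [Finset.inf'_cons hs]
        exact hinf _ (hfF a.1 a.2) _ ih
    exact hinf e he _ this
  have hgpos : (⊥ : L) < g := by
    rcases eq_bot_or_bot_lt g with h0 | h0
    · exact absurd (h0 ▸ hgF) hbot
    · exact h0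
  obtain ⟨a, haE, hna⟩ := htight g hgpos inf_le_left
  apply hna
  have hgf : g ≤ f a haE := by
    exact le_trans inf_le_right
      (Finset.inf'_le (fun x : {x // x ∈ E} => f x.1 x.2) (Finset.mem_attach E ⟨a, haE⟩))
  exact le_bot_iff.mp (le_trans (inf_le_inf_right a hgf) (hfa a haE).le)
end

section
/- Let X be a nonempty finite subset of A*. Then the right ideal X·A* is essential (i.e. X·A* ∩ z·A* ≠ ∅ for every z ∈ A*) if and only if there exists a finite maximal prefix code Z with Z·A* = X·A*. In other words, every essential finitely generated right ideal of A* is generated by a finite maximal prefix code, and conversely. -/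
/-- A (finite) prefix code over the alphabet `Fin n`. -/
def PrefixCode {n : ℕ} (X : Set (List (Fin n))) : Prop :=
  X.Finite ∧ ∀ x ∈ X, ∀ y ∈ X, x <+: y → x = y

/-- A maximal prefix code: a prefix code such that every string is
prefix-comparable with some element of it. -/
def MaximalPrefixCode {n : ℕ} (X : Set (List (Fin n))) : Prop :=
  PrefixCode X ∧ ∀ z : List (Fin n), ∃ x ∈ X, x <+: z ∨ z <+: x

/-- For a nonempty finite `X ⊆ A*`, the right ideal `X·A*` is essential
(it meets every principal right ideal `z·A*`) if and only if `X·A*` is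
generated by a finite maximal prefix code. -/
theorem stmt_4 (n : ℕ) (hn : 2 ≤ n) (X : Set (List (Fin n)))
    (hfin : X.Finite) (hne : X.Nonempty) :
    (∀ z : List (Fin n), ∃ w : List (Fin n), z <+: w ∧ ∃ x ∈ X, x <+: w) ↔
    (∃ Z : Set (List (Fin n)), MaximalPrefixCode Z ∧
      {w | ∃ x ∈ Z, x <+: w} = {w | ∃ x ∈ X, x <+: w}) := by
  constructor
  · intro hess
    refine ⟨{x ∈ X | ∀ y ∈ X, y <+: x → y = x}, ?_, ?_⟩
    case' refine_1 => refine ⟨⟨hfin.subset fun a ha => ha.1,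
      fun x hx y hy hxy => hy.2 x hx.1 hxy⟩, ?_⟩
    all_goals
      have key : ∀ w : List (Fin n), (∃ x ∈ X, x <+: w) →
          ∃ y ∈ {x ∈ X | ∀ y ∈ X, y <+: x → y = x}, y <+: w := by
        intro w ⟨x, hx, hxw⟩
        obtain ⟨y, hy, hymin⟩ := Set.exists_min_image {y ∈ X | y <+: w} List.length
          (hfin.subset fun a ha => ha.1) ⟨x, hx, hxw⟩
        refine ⟨y, ⟨hy.1, fun y' hy' hy'y => ?_⟩, hy.2⟩
        exact List.IsPrefix.eq_of_length hy'y
          (le_antisymm hy'y.length_le (hymin y' ⟨hy', hy'y.trans hy.2⟩))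
    · intro z
      obtain ⟨w, hzw, hxw⟩ := hess z
      obtain ⟨y, hyZ, hyw⟩ := key w hxw
      exact ⟨y, hyZ, List.prefix_or_prefix_of_prefix hyw hzw⟩
    · ext w
      exact ⟨fun ⟨y, hy, hyw⟩ => ⟨y, hy.1, hyw⟩, key w⟩
  · rintro ⟨Z, ⟨_, hZmax⟩, hZeq⟩ z
    obtain ⟨x, hxZ, hc | hc⟩ := hZmax z
    · have : z ∈ {w | ∃ x ∈ Z, x <+: w} := ⟨x, hxZ, hc⟩
      rw [hZeq] at this
      exact ⟨z, List.prefix_refl z, this⟩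
    · have : x ∈ {w | ∃ x ∈ Z, x <+: w} := ⟨x, hxZ, List.prefix_refl x⟩
      rw [hZeq] at this
      exact ⟨x, hc, this⟩
end

section
/- Every finite maximal prefix code over A is either the trivial maximal prefix code {ε} or is obtained from {ε} by a finite sequence of caret expansions: for every finite maximal prefix code X, the pair ({ε}, X) lies in the reflexive–transitive closure of the relation Expand. -/
/-- `Expand X X'` holds if `X'` is the caret expansion of `X` at some `x ∈ X`. -/
def Expand (n : ℕ) (X X' : Set (List (Fin n))) : Prop :=
  ∃ x ∈ X, X' = (X \ {x}) ∪ {l : List (Fin n) | ∃ a : Fin n, l = x ++ [a]}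

lemma prefix_concat_cases {α : Type*} {z y : List α} {b : α} (h : z <+: y ++ [b]) :
    z = y ++ [b] ∨ z <+: y := by
  rcases le_or_gt z.length y.length with hl | hl
  · exact Or.inr (List.prefix_of_prefix_length_le h (List.prefix_append y [b]) hl)
  · left
    apply List.IsPrefix.eq_of_length h
    have := h.length_le
    simp only [List.length_append, List.length_singleton] at this ⊢
    omega

lemma key (n : ℕ) (hn : 2 ≤ n) :
    ∀ N : ℕ, ∀ X : Set (List (Fin n)), ∀ hX : MaximalPrefixCode X,
      hX.1.1.toFinset.sum List.length ≤ N →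
      Relation.ReflTransGen (Expand n) {([] : List (Fin n))} X := by
  intro N
  induction N with
  | zero =>
    intro X hX hsum
    have hXeq : X = {([] : List (Fin n))} := by
      obtain ⟨x0, hx0, _⟩ := hX.2 []
      have hall : ∀ z ∈ X, z = ([] : List (Fin n)) := by
        intro z hz
        have hz' : z ∈ hX.1.1.toFinset := hX.1.1.mem_toFinset.2 hz
        have : z.length ≤ 0 := by
          calc z.length ≤ hX.1.1.toFinset.sum List.length :=
            Finset.single_le_sum (fun i _ => Nat.zero_le _) hz'
          _ ≤ 0 := hsum
        exact List.length_eq_zero_iff.1 (Nat.le_zero.1 this)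
      ext z
      simp only [Set.mem_singleton_iff]
      exact ⟨fun hz => hall z hz, fun hz => hz ▸ (hall x0 hx0 ▸ hx0)⟩
    rw [hXeq]
  | succ N ih =>
    intro X hX hsum
    by_cases hX0 : X = {([] : List (Fin n))}
    · rw [hX0]
    -- [] ∉ X
    have hnil : ([] : List (Fin n)) ∉ X := by
      intro h
      apply hX0
      ext z
      simp only [Set.mem_singleton_iff]
      constructor
      · intro hz
        exact (hX.1.2 [] h z hz List.nil_prefix).symm
      · intro hz; exact hz ▸ h
    -- pick element of max length
    obtain ⟨x0, hx0, _⟩ := hX.2 []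
    have hsne : hX.1.1.toFinset.Nonempty := ⟨x0, hX.1.1.mem_toFinset.2 hx0⟩
    obtain ⟨x, hxs, hmax⟩ := Finset.exists_max_image hX.1.1.toFinset List.length hsne
    have hxX : x ∈ X := hX.1.1.mem_toFinset.1 hxs
    have hmax' : ∀ z ∈ X, z.length ≤ x.length := fun z hz =>
      hmax z (hX.1.1.mem_toFinset.2 hz)
    have hxne : x ≠ [] := fun h => hnil (h ▸ hxX)
    obtain ⟨y, a, rfl⟩ : ∃ y a, x = y ++ [a] := by
      rcases x.eq_nil_or_concat' with h | ⟨L, b, h⟩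
      · exact absurd h hxne
      · exact ⟨L, b, h⟩
    -- all children of y are in X
    have hC : ∀ b : Fin n, y ++ [b] ∈ X := by
      intro b
      obtain ⟨z, hzX, hz⟩ := hX.2 (y ++ [b])
      rcases hz with hz | hz
      · rcases prefix_concat_cases hz with h | h
        · exact h ▸ hzX
        · have hlen : z.length ≤ y.length := h.length_le
          have heq : z = y ++ [a] := hX.1.2 z hzX (y ++ [a]) hxX
            (h.trans (List.prefix_append y [a]))
          have := congrArg List.length heq
          simp only [List.length_append, List.length_singleton] at this
          omega
      · have h1 : z.length ≤ y.length + 1 := by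
          have := hmax' z hzX
          simpa using this
        have h2 : y.length + 1 ≤ z.length := by
          have := hz.length_le
          simpa using this
        have : y ++ [b] = z := hz.eq_of_length (by simp; omega)
        exact this ▸ hzX
    have hyX : y ∉ X := by
      intro h
      have := hX.1.2 y h (y ++ [a]) hxX (List.prefix_append y [a])
      simp at this
    set C : Set (List (Fin n)) := {l | ∃ b : Fin n, l = y ++ [b]} with hCdef
    have hCsub : C ⊆ X := by rintro l ⟨b, rfl⟩; exact hC b
    set Y : Set (List (Fin n)) := (X \ C) ∪ {y} with hYdef
    have hyY : y ∈ Y := Or.inr rfl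
    have hExp : Expand n Y X := by
      refine ⟨y, hyY, ?_⟩
      have h1 : Y \ {y} = X \ C := by
        ext z
        simp only [hYdef, Set.mem_diff, Set.mem_union, Set.mem_singleton_iff]
        constructor
        · rintro ⟨h | h, hne⟩
          · exact h
          · exact absurd h hne
        · intro h
          exact ⟨Or.inl h, fun he => hyX (he ▸ h.1)⟩
      rw [h1]
      ext z
      simp only [Set.mem_union, Set.mem_diff]
      constructor
      · intro hz
        by_cases hzC : z ∈ C
        · exact Or.inr hzC
        · exact Or.inl ⟨hz, hzC⟩
      · rintro (⟨hz, _⟩ | hz)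
        · exact hz
        · exact hCsub hz
    -- Y is a maximal prefix code
    have hYfin : Y.Finite := (hX.1.1.diff).union (Set.finite_singleton y)
    have hYpc : PrefixCode Y := by
      refine ⟨hYfin, ?_⟩
      rintro u hu v hv huv
      rcases hu with ⟨huX, huC⟩ | hu
      · rcases hv with ⟨hvX, _⟩ | hv
        · exact hX.1.2 u huX v hvX huv
        · exfalso
          rw [Set.mem_singleton_iff] at hv
          have huv' : u <+: y := hv ▸ huv
          have : u = y ++ [a] := hX.1.2 u huX _ hxX (huv'.trans (List.prefix_append y [a]))
          exact huC ⟨a, this⟩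
      · rw [Set.mem_singleton_iff] at hu
        rcases hv with ⟨hvX, hvC⟩ | hv
        · -- u = y <+: v, v ∈ X \ C : contradiction
          exfalso
          have huv' : y <+: v := hu ▸ huv
          obtain ⟨w, hw⟩ := huv'
          cases w with
          | nil => simp at hw; exact hyX (hw ▸ hvX)
          | cons c rest =>
            have h1 : y ++ [c] <+: v := by
              rw [← hw]
              exact ⟨rest, by simp⟩
            have : y ++ [c] = v := hX.1.2 _ (hC c) v hvX h1
            exact hvC ⟨c, this.symm⟩
        · rw [Set.mem_singleton_iff] at hv; rw [hu, hv]
    have hYmax : MaximalPrefixCode Y := by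
      refine ⟨hYpc, ?_⟩
      intro z
      obtain ⟨w, hwX, hw⟩ := hX.2 z
      by_cases hwC : w ∈ C
      · obtain ⟨b, rfl⟩ := hwC
        refine ⟨y, hyY, ?_⟩
        rcases hw with hw | hw
        · exact Or.inl ((List.prefix_append y [b]).trans hw)
        · rcases prefix_concat_cases hw with h | h
          · exact Or.inl (h ▸ List.prefix_append y [b])
          · exact Or.inr h
      · exact ⟨w, Or.inl ⟨hwX, hwC⟩, hw⟩
    -- measure decreases
    have hmeas : hYmax.1.1.toFinset.sum List.length ≤ N := by
      classical
      set Cfin : Finset (List (Fin n)) :=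
        Finset.univ.image (fun b : Fin n => y ++ [b]) with hCfin
      have hCfinX : Cfin ⊆ hX.1.1.toFinset := by
        intro l hl
        simp only [hCfin, Finset.mem_image] at hl
        obtain ⟨b, _, rfl⟩ := hl
        exact hX.1.1.mem_toFinset.2 (hC b)
      have hteq : hYmax.1.1.toFinset = insert y (hX.1.1.toFinset \ Cfin) := by
        ext z
        simp only [Set.Finite.mem_toFinset, Finset.mem_insert, Finset.mem_sdiff,
          Set.Finite.mem_toFinset, hYdef, Set.mem_union, Set.mem_diff,
          Set.mem_singleton_iff, hCdef, Set.mem_setOf_eq, hCfin, Finset.mem_image,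
          Finset.mem_univ, true_and]
        tauto
      have hyni : y ∉ hX.1.1.toFinset \ Cfin := by
        intro h
        exact hyX (hX.1.1.mem_toFinset.1 (Finset.mem_sdiff.1 h).1)
      have h1 : hYmax.1.1.toFinset.sum List.length =
          (hX.1.1.toFinset \ Cfin).sum List.length + y.length := by
        rw [hteq, Finset.sum_insert hyni]; ring
      have h2 : (hX.1.1.toFinset \ Cfin).sum List.length + Cfin.sum List.length =
          hX.1.1.toFinset.sum List.length := Finset.sum_sdiff hCfinX
      have h3 : y.length + 1 ≤ Cfin.sum List.length := by
        have hmem : y ++ [a] ∈ Cfin := by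
          simp [hCfin]
        calc y.length + 1 = (y ++ [a]).length := by simp
        _ ≤ Cfin.sum List.length := Finset.single_le_sum (fun i _ => Nat.zero_le _) hmem
      omega
    exact (ih Y hYmax hmeas).tail hExp

/-- Every finite maximal prefix code is obtained from the trivial maximal prefix
code `{ε}` by a finite sequence of caret expansions. -/
theorem stmt_8 (n : ℕ) (hn : 2 ≤ n) (X : Set (List (Fin n)))
    (hX : MaximalPrefixCode X) :
    Relation.ReflTransGen (Expand n) {([] : List (Fin n))} X := by
  exact key n hn (hX.1.1.toFinset.sum List.length) X hX le_rfl
end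

section
/- Let X and Y be nonempty finite prefix codes over A. Then the following are equivalent: (a) X·A* ⊆ Y·A*, and every string z ∈ Y·A* is prefix-comparable with some element of X; (b) X is obtained from Y by a finite sequence of caret expansions, i.e. (Y, X) lies in the reflexive–transitive closure of the relation Expand. (Condition (a) expresses that 1_X ≤_e 1_Y, where 1_X denotes the identity map on X·A*, in the inverse monoid D_n of bijective morphisms between finitely generated right ideals of A*.) -/
open scoped Classical

section Aux

variable {n : ℕ}

lemma pref_comp {α : Type*} {x y z : List α} (h1 : x <+: z) (h2 : y <+: z) :
    x <+: y ∨ y <+: x := by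
  rcases le_total x.length y.length with h | h
  · left
    rw [List.prefix_iff_eq_take.mp h1, List.prefix_iff_eq_take.mp h2]
    exact (List.take_isPrefix_take).mpr (Or.inl h)
  · right
    rw [List.prefix_iff_eq_take.mp h1, List.prefix_iff_eq_take.mp h2]
    exact (List.take_isPrefix_take).mpr (Or.inl h)

lemma pref_antisymm {α : Type*} {x y : List α} (h1 : x <+: y) (h2 : y <+: x) : x = y :=
  List.IsPrefix.eq_of_length h1 (Nat.le_antisymm h1.length_le h2.length_le)

lemma unique_pref {Y : Set (List (Fin n))} (hY : PrefixCode Y) {y1 y2 z : List (Fin n)}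
    (h1 : y1 ∈ Y) (h2 : y2 ∈ Y) (p1 : y1 <+: z) (p2 : y2 <+: z) : y1 = y2 := by
  rcases pref_comp p1 p2 with h | h
  · exact hY.2 y1 h1 y2 h2 h
  · exact (hY.2 y2 h2 y1 h1 h).symm

/-- Every element of `Y` has an extension inside `X`. -/
lemma exists_ext (hn : 2 ≤ n) {X Y : Set (List (Fin n))} (hX : PrefixCode X) (hY : PrefixCode Y)
    (hsub : {z | ∃ x ∈ X, x <+: z} ⊆ {z | ∃ y ∈ Y, y <+: z})
    (hcmp : ∀ z ∈ {z : List (Fin n) | ∃ y ∈ Y, y <+: z}, ∃ x ∈ X, z <+: x ∨ x <+: z)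
    {y : List (Fin n)} (hy : y ∈ Y) : ∃ x ∈ X, y <+: x := by
  obtain ⟨L, hL⟩ : ∃ L, ∀ x ∈ X, x.length ≤ L :=
    ⟨hX.1.toFinset.sup List.length, fun x hx => Finset.le_sup (by simpa using hx)⟩
  set z := y ++ List.replicate (L + 1) (⟨0, by omega⟩ : Fin n) with hz
  have hzY : z ∈ {z | ∃ y ∈ Y, y <+: z} := ⟨y, hy, ⟨_, rfl⟩⟩
  obtain ⟨x, hx, hc⟩ := hcmp z hzY
  have hxz : x <+: z := by
    rcases hc with h | h
    · exfalso
      have h1 := h.length_le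
      have hzl : z.length = y.length + (L + 1) := by simp [hz]
      have h2 := hL x hx
      omega
    · exact h
  obtain ⟨y', hy', hy'x⟩ := hsub ⟨x, hx, List.prefix_refl x⟩
  have he : y' = y := unique_pref hY hy' hy (hy'x.trans hxz) ⟨_, rfl⟩
  exact ⟨x, hx, he ▸ hy'x⟩

lemma ideal_expand {Y : Set (List (Fin n))} (hY : PrefixCode Y) {y : List (Fin n)} (hy : y ∈ Y) :
    {z | ∃ y' ∈ (Y \ {y}) ∪ {l : List (Fin n) | ∃ a : Fin n, l = y ++ [a]}, y' <+: z}
      = {z | ∃ y' ∈ Y, y' <+: z} \ {y} := by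
  ext z
  simp only [Set.mem_setOf_eq, Set.mem_diff, Set.mem_singleton_iff, Set.mem_union]
  constructor
  · rintro ⟨w, hw, hwz⟩
    rcases hw with ⟨hwY, hwny⟩ | ⟨a, rfl⟩
    · refine ⟨⟨w, hwY, hwz⟩, ?_⟩
      rintro rfl
      exact hwny (hY.2 w hwY z hy hwz)
    · refine ⟨⟨y, hy, (List.prefix_append y [a]).trans hwz⟩, ?_⟩
      rintro rfl
      have := hwz.length_le
      simp at this
  · rintro ⟨⟨w, hwY, hwz⟩, hzny⟩
    by_cases hwy : w = y
    · subst hwy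
      obtain ⟨u, rfl⟩ := hwz
      cases u with
      | nil => exact absurd (by simp) hzny
      | cons a t => exact ⟨w ++ [a], Or.inr ⟨a, rfl⟩, ⟨t, by simp⟩⟩
    · exact ⟨w, Or.inl ⟨hwY, hwy⟩, hwz⟩

lemma expand_code {Y : Set (List (Fin n))} (hY : PrefixCode Y) {y : List (Fin n)} (hy : y ∈ Y) :
    PrefixCode ((Y \ {y}) ∪ {l : List (Fin n) | ∃ a : Fin n, l = y ++ [a]}) := by
  constructor
  · refine Set.Finite.union (hY.1.diff) ?_
    have he : {l : List (Fin n) | ∃ a : Fin n, l = y ++ [a]}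
        = (fun a : Fin n => y ++ [a]) '' Set.univ := by
      ext l; simp [eq_comm]
    rw [he]
    exact Set.finite_univ.image _
  · rintro u hu v hv huv
    rcases hu with ⟨huY, huny⟩ | ⟨a, rfl⟩ <;> rcases hv with ⟨hvY, hvny⟩ | ⟨b, rfl⟩
    · exact hY.2 u huY v hvY huv
    · rcases pref_comp huv (List.prefix_append y [b]) with h | h
      · exact absurd (hY.2 u huY y hy h) huny
      · exact absurd (hY.2 y hy u huY h).symm huny
    · have hyv : y <+: v := (List.prefix_append y [a]).trans huv
      have he := hY.2 y hy v hvY hyv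
      subst he
      have := huv.length_le
      simp at this
    · exact List.IsPrefix.eq_of_length huv (by simp)

/-- The measure: total number of `Y·A*`-prefixes of elements of `X`. -/
noncomputable def mu (X : Set (List (Fin n))) (hX : X.Finite) (Y : Set (List (Fin n))) : ℕ :=
  ∑ x ∈ hX.toFinset, (x.inits.toFinset.filter (fun p => ∃ y ∈ Y, y <+: p)).card

lemma mu_lt {X Y : Set (List (Fin n))} (hXf : X.Finite) (hY : PrefixCode Y) {y : List (Fin n)}
    (hy : y ∈ Y) {x0 : List (Fin n)} (hx0 : x0 ∈ X) (hyx0 : y <+: x0) :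
    mu X hXf ((Y \ {y}) ∪ {l : List (Fin n) | ∃ a : Fin n, l = y ++ [a]}) < mu X hXf Y := by
  have hid := ideal_expand hY hy
  have hfilter : ∀ x : List (Fin n),
      x.inits.toFinset.filter
          (fun p => ∃ y' ∈ (Y \ {y}) ∪ {l : List (Fin n) | ∃ a : Fin n, l = y ++ [a]}, y' <+: p)
        = (x.inits.toFinset.filter (fun p => ∃ y' ∈ Y, y' <+: p)).erase y := by
    intro x
    ext p
    have hp : (∃ y' ∈ (Y \ {y}) ∪ {l : List (Fin n) | ∃ a : Fin n, l = y ++ [a]}, y' <+: p)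
        ↔ (∃ y' ∈ Y, y' <+: p) ∧ p ≠ y := by
      have := Set.ext_iff.mp hid p
      simpa [Set.mem_diff] using this
    simp only [Finset.mem_filter, Finset.mem_erase, hp]
    tauto
  apply Finset.sum_lt_sum
  · intro i _
    rw [hfilter i]
    exact Finset.card_erase_le
  · refine ⟨x0, by simpa using hx0, ?_⟩
    rw [hfilter x0]
    apply Finset.card_erase_lt_of_mem
    refine Finset.mem_filter.mpr ⟨?_, ⟨y, hy, List.prefix_refl y⟩⟩
    rw [List.mem_toFinset, List.mem_inits]
    exact hyx0

lemma hard (hn : 2 ≤ n) (X : Set (List (Fin n))) (hX : PrefixCode X) :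
    ∀ k (Y : Set (List (Fin n))), mu X hX.1 Y ≤ k → PrefixCode Y →
      ({z | ∃ x ∈ X, x <+: z} ⊆ {z | ∃ y ∈ Y, y <+: z}) →
      (∀ z ∈ {z : List (Fin n) | ∃ y ∈ Y, y <+: z}, ∃ x ∈ X, z <+: x ∨ x <+: z) →
      Relation.ReflTransGen (Expand n) Y X := by
  intro k
  induction k using Nat.strong_induction_on with
  | _ k ih =>
    intro Y hmu hY hsub hcmp
    by_cases hXY : X = Y
    · exact hXY ▸ Relation.ReflTransGen.refl
    · -- find y ∈ Y \ X
      have hyex : ∃ y ∈ Y, y ∉ X := by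
        by_contra hcon
        push_neg at hcon
        apply hXY
        apply Set.Subset.antisymm
        · intro x hx
          obtain ⟨y', hy', hp⟩ := hsub ⟨x, hx, List.prefix_refl x⟩
          have := hX.2 y' (hcon y' hy') x hx hp
          exact this ▸ hy'
        · exact hcon
      obtain ⟨y, hy, hyX⟩ := hyex
      set Y' := (Y \ {y}) ∪ {l : List (Fin n) | ∃ a : Fin n, l = y ++ [a]} with hY'def
      have hEx : Expand n Y Y' := ⟨y, hy, rfl⟩
      have hY' : PrefixCode Y' := expand_code hY hy
      have hid := ideal_expand hY hy
      -- X's ideal avoids y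
      obtain ⟨x2, hx2, hyx2⟩ := exists_ext hn hX hY hsub hcmp hy
      have hsub' : {z | ∃ x ∈ X, x <+: z} ⊆ {z | ∃ y' ∈ Y', y' <+: z} := by
        intro z hz
        rw [hid]
        refine ⟨hsub hz, ?_⟩
        rintro rfl
        obtain ⟨x, hx, hxy⟩ := hz
        have he := hX.2 x hx x2 hx2 (hxy.trans hyx2)
        subst he
        exact hyX (pref_antisymm hxy hyx2 ▸ hx)
      have hcmp' : ∀ z ∈ {z : List (Fin n) | ∃ y' ∈ Y', y' <+: z}, ∃ x ∈ X, z <+: x ∨ x <+: z := by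
        intro z hz
        rw [hid] at hz
        exact hcmp z hz.1
      have hlt : mu X hX.1 Y' < mu X hX.1 Y := mu_lt hX.1 hY hy hx2 hyx2
      exact Relation.ReflTransGen.head hEx
        (ih (mu X hX.1 Y') (by omega) Y' le_rfl hY' hsub' hcmp')

lemma easy (hn : 2 ≤ n) {X Y : Set (List (Fin n))}
    (h : Relation.ReflTransGen (Expand n) Y X) :
    ({z | ∃ x ∈ X, x <+: z} ⊆ {z | ∃ y ∈ Y, y <+: z}) ∧
      ∀ z ∈ {z : List (Fin n) | ∃ y ∈ Y, y <+: z}, ∃ x ∈ X, z <+: x ∨ x <+: z := by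
  induction h with
  | refl =>
    refine ⟨fun z hz => hz, fun z hz => ?_⟩
    obtain ⟨y, hy, hp⟩ := hz
    exact ⟨y, hy, Or.inr hp⟩
  | tail hZX hstep ihZ =>
    obtain ⟨x0, hx0Z, rfl⟩ := hstep
    obtain ⟨ihsub, ihcmp⟩ := ihZ
    refine ⟨?_, ?_⟩
    · rintro z ⟨w, hw, hwz⟩
      rcases hw with ⟨hwZ, _⟩ | ⟨a, rfl⟩
      · exact ihsub ⟨w, hwZ, hwz⟩
      · exact ihsub ⟨x0, hx0Z, (List.prefix_append _ _).trans hwz⟩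
    · intro z hz
      obtain ⟨w, hwZ, hc⟩ := ihcmp z hz
      by_cases hwx : w = x0
      · subst hwx
        rcases hc with h | h
        · exact ⟨w ++ [⟨0, by omega⟩], Or.inr ⟨⟨0, by omega⟩, rfl⟩,
            Or.inl (h.trans (List.prefix_append _ _))⟩
        · obtain ⟨u, rfl⟩ := h
          cases u with
          | nil => exact ⟨w ++ [⟨0, by omega⟩], Or.inr ⟨⟨0, by omega⟩, rfl⟩,
              Or.inl (by simpa using List.prefix_append w [(⟨0, by omega⟩ : Fin n)])⟩
          | cons a t => exact ⟨w ++ [a], Or.inr ⟨a, rfl⟩, Or.inr ⟨t, by simp⟩⟩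
      · exact ⟨w, Or.inl ⟨hwZ, hwx⟩, hc⟩

end Aux

/-- For nonempty finite prefix codes `X`, `Y`: `1_X ≤_e 1_Y` (that is,
`X·A* ⊆ Y·A*` and every `z ∈ Y·A*` is prefix-comparable with some element of
`X`) if and only if `X` is obtained from `Y` by a finite sequence of caret
expansions. -/
theorem stmt_11 (n : ℕ) (hn : 2 ≤ n) (X Y : Set (List (Fin n)))
    (hX : PrefixCode X) (hY : PrefixCode Y)
    (hXne : X.Nonempty) (hYne : Y.Nonempty) :
    (({z | ∃ x ∈ X, x <+: z} ⊆ {z | ∃ y ∈ Y, y <+: z}) ∧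
      ∀ z ∈ {z : List (Fin n) | ∃ y ∈ Y, y <+: z}, ∃ x ∈ X, z <+: x ∨ x <+: z) ↔
    Relation.ReflTransGen (Expand n) Y X := by
  constructor
  · rintro ⟨hsub, hcmp⟩
    exact hard hn X hX (mu X hX.1 Y) Y le_rfl hY hsub hcmp
  · intro h
    exact easy hn h
end

section
/- Let S be an inverse semigroup with zero on which the Lenz relation ≡ is idempotent-pure. Then for all a, b ∈ S: a ≡ b if and only if there exists c ∈ S with c ≤_e a and c ≤_e b. -/
/-- An inverse semigroup with zero. -/
class InverseSemigroupWithZero (S : Type*) extends Semigroup S, Zero S where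
  zero_mul : ∀ a : S, 0 * a = 0
  mul_zero : ∀ a : S, a * 0 = 0
  inv : S → S
  mul_inv_mul : ∀ a : S, a * inv a * a = a
  inv_mul_inv : ∀ a : S, inv a * a * inv a = inv a
  inv_unique : ∀ a b : S, a * b * a = a → b * a * b = b → b = inv a

namespace InverseSemigroupWithZero

variable {S : Type*} [InverseSemigroupWithZero S]

/-- The natural partial order: `a ≤ b` iff `a = b * a⁻¹ * a`. -/
def nle (a b : S) : Prop := a = b * inv a * a

/-- `a ≤_e b`: `a` is essential in `b`. -/
def essIn (a b : S) : Prop :=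
  nle a b ∧ ∀ x : S, x ≠ 0 → nle x b → a * inv x * x ≠ 0

/-- The Lenz relation `≡`. -/
def lenz (a b : S) : Prop :=
  (∀ x : S, x ≠ 0 → nle x a → ∃ z : S, z ≠ 0 ∧ nle z x ∧ nle z b) ∧
  (∀ y : S, y ≠ 0 → nle y b → ∃ z : S, z ≠ 0 ∧ nle z y ∧ nle z a)

end InverseSemigroupWithZero

namespace InverseSemigroupWithZero

variable {S : Type*} [InverseSemigroupWithZero S]

theorem inv_inv' (a : S) : inv (inv a) = a :=
  (inv_unique (inv a) a (inv_mul_inv a) (mul_inv_mul a)).symm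

theorem inv_idem {e : S} (he : e * e = e) : inv e = e :=
  (inv_unique e e (by rw [he, he]) (by rw [he, he])).symm

theorem d_idem (a : S) : (inv a * a) * (inv a * a) = inv a * a := by
  rw [mul_assoc, ← mul_assoc a, mul_inv_mul]

theorem r_idem (a : S) : (a * inv a) * (a * inv a) = a * inv a := by
  rw [mul_assoc, ← mul_assoc (inv a), inv_mul_inv]

theorem idem_mul {e f : S} (he : e * e = e) (hf : f * f = f) :
    (e * f) * (e * f) = e * f := by
  have habse : ∀ t : S, e * (e * t) = e * t := fun t => by rw [← mul_assoc, he]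
  have habsf : ∀ t : S, f * (f * t) = f * t := fun t => by rw [← mul_assoc, hf]
  have h1 : (e * f) * (f * inv (e*f) * e) * (e * f) = e * f := by
    have e1 : (e * f) * (f * inv (e*f) * e) * (e * f)
        = e * (f * (f * (inv (e*f) * (e * (e * f))))) := by simp only [mul_assoc]
    have e2 : e * (f * (inv (e*f) * (e * f))) = (e*f) * inv (e*f) * (e*f) := by
      simp only [mul_assoc]
    rw [e1, habsf, habse, e2, mul_inv_mul]
  have h2 : (f * inv (e*f) * e) * (e * f) * (f * inv (e*f) * e) = f * inv (e*f) * e := by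
    have e1 : (f * inv (e*f) * e) * (e * f) * (f * inv (e*f) * e)
        = f * (inv (e*f) * (e * (e * (f * (f * (inv (e*f) * e)))))) := by
      simp only [mul_assoc]
    have e2 : f * (inv (e*f) * (e * (f * (inv (e*f) * e))))
        = f * (inv (e*f) * (e*f) * inv (e*f)) * e := by simp only [mul_assoc]
    rw [e1, habse, habsf, e2, inv_mul_inv]
  have hfxe : f * inv (e*f) * e = inv (e*f) := inv_unique _ _ h1 h2
  have hxx : inv (e*f) * inv (e*f) = inv (e*f) := by
    conv_lhs => rw [← hfxe]
    have e1 : (f * inv (e*f) * e) * (f * inv (e*f) * e)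
        = f * (inv (e*f) * (e*f) * inv (e*f)) * e := by simp only [mul_assoc]
    rw [e1, inv_mul_inv, hfxe]
  have hef : e * f = inv (e*f) := by rw [← inv_idem hxx, inv_inv']
  rw [hef, hxx]

theorem idem_comm {e f : S} (he : e * e = e) (hf : f * f = f) :
    e * f = f * e := by
  have hef := idem_mul he hf
  have hfe := idem_mul hf he
  have habse : ∀ t : S, e * (e * t) = e * t := fun t => by rw [← mul_assoc, he]
  have habsf : ∀ t : S, f * (f * t) = f * t := fun t => by rw [← mul_assoc, hf]
  have h1 : (e * f) * (f * e) * (e * f) = e * f := by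
    have e1 : (e * f) * (f * e) * (e * f) = e * (f * f) * (e * (e * f)) := by
      simp only [mul_assoc]
    have e2 : e * f * (e * (e * f)) = (e * f) * (e * f) := by
      rw [habse]
    rw [e1, hf, e2, hef]
  have h2 : (f * e) * (e * f) * (f * e) = f * e := by
    have e1 : (f * e) * (e * f) * (f * e) = f * (e * e) * (f * (f * e)) := by
      simp only [mul_assoc]
    have e2 : f * e * (f * (f * e)) = (f * e) * (f * e) := by
      rw [habsf]
    rw [e1, he, e2, hfe]
  have := inv_unique (e * f) (f * e) h1 h2
  rw [this, inv_idem hef]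

theorem mul_inv_rev' (a b : S) : inv (a * b) = inv b * inv a := by
  refine (inv_unique _ _ ?_ ?_).symm
  · have e1 : (a * b) * (inv b * inv a) * (a * b) = a * ((b * inv b) * (inv a * a)) * b := by
      simp only [mul_assoc]
    rw [e1, idem_comm (r_idem b) (d_idem a)]
    have e2 : a * (inv a * a * (b * inv b)) * b = (a * inv a * a) * (b * inv b * b) := by
      simp only [mul_assoc]
    rw [e2, mul_inv_mul, mul_inv_mul]
  · have e1 : (inv b * inv a) * (a * b) * (inv b * inv a) =
        inv b * ((inv a * a) * (b * inv b)) * inv a := by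
      simp only [mul_assoc]
    rw [e1, idem_comm (d_idem a) (r_idem b)]
    have e2 : inv b * (b * inv b * (inv a * a)) * inv a =
        (inv b * b * inv b) * (inv a * a * inv a) := by
      simp only [mul_assoc]
    rw [e2, inv_mul_inv, inv_mul_inv]

end InverseSemigroupWithZero

namespace InverseSemigroupWithZero

variable {S : Type*} [InverseSemigroupWithZero S]

theorem nle_alt2 {a b : S} (h : nle a b) : a * inv b * b = a := by
  conv_lhs => rw [h]
  rw [show b * inv a * a * inv b * b = b * ((inv a * a) * (inv b * b)) by simp only [mul_assoc],
    idem_comm (d_idem a) (d_idem b),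
    show b * (inv b * b * (inv a * a)) = (b * inv b * b) * (inv a * a) by simp only [mul_assoc],
    mul_inv_mul, ← mul_assoc, ← h]

theorem nle_alt1 {a b : S} (h : nle a b) : a = a * inv a * b := by
  have hia : inv a = inv a * a * inv b := by
    conv_lhs => rw [h, mul_assoc]
    rw [mul_inv_rev', inv_idem (d_idem a)]
  have haa : a * inv a = a * inv b := by
    conv_lhs => rw [hia]
    rw [show a * (inv a * a * inv b) = (a * inv a * a) * inv b by simp only [mul_assoc],
      mul_inv_mul]
  rw [haa, nle_alt2 h]

theorem nle_dle {a b : S} (h : nle a b) : inv b * b * (inv a * a) = inv a * a := by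
  have key : (inv a * a) * (inv b * b) = inv a * a := by
    conv_lhs => rw [show (inv a * a) * (inv b * b) = inv a * (a * inv b * b) by
      simp only [mul_assoc], nle_alt2 h]
  rw [idem_comm (d_idem b) (d_idem a)]
  exact key

theorem nle_trans {a b c : S} (hab : nle a b) (hbc : nle b c) : nle a c := by
  have key : c * inv a * a = a := by
    rw [mul_assoc, ← nle_dle hab,
      show c * (inv b * b * (inv a * a)) = (c * inv b * b) * (inv a * a) by simp only [mul_assoc],
      ← hbc, ← mul_assoc, ← hab]
  exact key.symm

theorem nle_mul_left (c : S) {a b : S} (h : nle a b) : nle (c * a) (c * b) := by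
  show c * a = (c * b) * inv (c * a) * (c * a)
  rw [mul_inv_rev']
  refine (?_ : (c * b) * (inv a * inv c) * (c * a) = c * a).symm
  calc (c * b) * (inv a * inv c) * (c * a)
      = c * (b * (inv a * ((inv c * c) * a))) := by simp only [mul_assoc]
    _ = c * (b * (inv a * ((inv c * c) * (a * inv a * a)))) := by rw [mul_inv_mul]
    _ = c * (b * (inv a * ((inv c * c) * (a * inv a) * a))) := by simp only [mul_assoc]
    _ = c * (b * (inv a * ((a * inv a) * (inv c * c) * a))) := by
        rw [idem_comm (d_idem c) (r_idem a)]
    _ = (c * (b * inv a * a)) * (inv a * (inv c * (c * a))) := by simp only [mul_assoc]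
    _ = (c * a) * (inv a * (inv c * (c * a))) := by rw [← h]
    _ = (c * a) * (inv a * inv c) * (c * a) := by simp only [mul_assoc]
    _ = (c * a) * inv (c * a) * (c * a) := by rw [mul_inv_rev']
    _ = c * a := mul_inv_mul _

theorem nle_mul_right {a b : S} (h : nle a b) (c : S) : nle (a * c) (b * c) := by
  show a * c = (b * c) * inv (a * c) * (a * c)
  rw [mul_inv_rev']
  refine (?_ : (b * c) * (inv c * inv a) * (a * c) = a * c).symm
  calc (b * c) * (inv c * inv a) * (a * c)
      = b * ((c * inv c) * (inv a * a)) * c := by simp only [mul_assoc]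
    _ = b * ((inv a * a) * (c * inv c)) * c := by rw [idem_comm (r_idem c) (d_idem a)]
    _ = (b * inv a * a) * (c * inv c * c) := by simp only [mul_assoc]
    _ = a * c := by rw [← h, mul_inv_mul]

theorem nle_mul_idem_right {e : S} (he : e * e = e) (a : S) : nle (a * e) a := by
  show a * e = a * inv (a * e) * (a * e)
  rw [mul_inv_rev', inv_idem he]
  refine (?_ : a * (e * inv a) * (a * e) = a * e).symm
  calc a * (e * inv a) * (a * e)
      = a * (e * ((inv a * a) * e)) := by simp only [mul_assoc]
    _ = a * (e * (e * (inv a * a))) := by rw [idem_comm (d_idem a) he]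
    _ = a * ((e * e) * (inv a * a)) := by simp only [mul_assoc]
    _ = a * (e * (inv a * a)) := by rw [he]
    _ = a * ((inv a * a) * e) := by rw [idem_comm he (d_idem a)]
    _ = (a * inv a * a) * e := by simp only [mul_assoc]
    _ = a * e := by rw [mul_inv_mul]

theorem nle_mul_idem_left {e : S} (he : e * e = e) (a : S) : nle (e * a) a := by
  show e * a = a * inv (e * a) * (e * a)
  rw [mul_inv_rev', inv_idem he]
  refine (?_ : a * (inv a * e) * (e * a) = e * a).symm
  calc a * (inv a * e) * (e * a)
      = a * inv a * ((e * e) * a) := by simp only [mul_assoc]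
    _ = a * inv a * (e * a) := by rw [he]
    _ = (a * inv a) * e * a := by simp only [mul_assoc]
    _ = e * (a * inv a) * a := by rw [idem_comm (r_idem a) he]
    _ = e * (a * inv a * a) := by simp only [mul_assoc]
    _ = e * a := by rw [mul_inv_mul]

theorem meet_nle_left (c1 c2 : S) : nle (c1 * inv c2 * c2) c1 := by
  simpa only [← mul_assoc] using nle_mul_idem_right (d_idem c2) c1

theorem meet_comm {a c1 c2 : S} (h1 : nle c1 a) (h2 : nle c2 a) :
    c1 * inv c2 * c2 = c2 * inv c1 * c1 := by
  calc c1 * inv c2 * c2 = (a * inv c1 * c1) * (inv c2 * c2) := by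
        conv_lhs => rw [h1]
        simp only [mul_assoc]
    _ = a * ((inv c1 * c1) * (inv c2 * c2)) := by simp only [mul_assoc]
    _ = a * ((inv c2 * c2) * (inv c1 * c1)) := by rw [idem_comm (d_idem c1) (d_idem c2)]
    _ = (a * inv c2 * c2) * (inv c1 * c1) := by simp only [mul_assoc]
    _ = c2 * inv c1 * c1 := by
        conv_rhs => rw [h2]
        simp only [mul_assoc]

theorem meet_nle_right {a c1 c2 : S} (h1 : nle c1 a) (h2 : nle c2 a) :
    nle (c1 * inv c2 * c2) c2 := by
  rw [meet_comm h1 h2]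
  exact meet_nle_left c2 c1

theorem meet_ge {z c1 c2 : S} (hz1 : nle z c1) (hz2 : nle z c2) :
    nle z (c1 * inv c2 * c2) := by
  have key : (c1 * inv c2 * c2) * inv z * z = z := by
    rw [show (c1 * inv c2 * c2) * inv z * z = c1 * (inv c2 * c2 * (inv z * z)) by
      simp only [mul_assoc], nle_dle hz2, ← mul_assoc, ← hz1]
  exact key.symm

theorem ne_zero_of_nle {z m : S} (hz : z ≠ 0) (h : nle z m) : m ≠ 0 := by
  intro hm
  apply hz
  have h' : z = m * inv z * z := h
  rw [hm, zero_mul, zero_mul] at h'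
  exact h'

theorem half_mul_right {a b : S} (c : S)
    (h : ∀ x : S, x ≠ 0 → nle x a → ∃ z : S, z ≠ 0 ∧ nle z x ∧ nle z b) :
    ∀ x : S, x ≠ 0 → nle x (a * c) → ∃ z : S, z ≠ 0 ∧ nle z x ∧ nle z (b * c) := by
  intro x hx hxac
  have hx1 : x * inv c * c = x := by
    conv_lhs => rw [nle_alt1 hxac]
    rw [show x * inv x * (a * c) * inv c * c = x * inv x * (a * (c * inv c * c)) by
      simp only [mul_assoc], mul_inv_mul, ← nle_alt1 hxac]
  have hxc0 : x * inv c ≠ 0 := fun h0 => hx (by rw [h0, zero_mul] at hx1; exact hx1.symm)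
  have hxca : nle (x * inv c) a := by
    have t1 : nle (x * inv c) (a * c * inv c) := nle_mul_right hxac (inv c)
    have t2 : nle (a * c * inv c) a := by
      simpa only [← mul_assoc] using nle_mul_idem_right (r_idem c) a
    exact nle_trans t1 t2
  obtain ⟨z, hz0, hz1, hz2⟩ := h _ hxc0 hxca
  have hzc : z * c * inv c = z := by
    conv_lhs => rw [nle_alt1 hz1]
    rw [show z * inv z * (x * inv c) * c * inv c = z * inv z * (x * (inv c * c * inv c)) by
      simp only [mul_assoc], inv_mul_inv, ← nle_alt1 hz1]
  refine ⟨z * c, fun h0 => hz0 (by rw [h0, zero_mul] at hzc; exact hzc.symm), ?_,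
    nle_mul_right hz2 c⟩
  have t := nle_mul_right hz1 c
  rwa [hx1] at t

theorem half_mul_left {a b : S} (c : S)
    (h : ∀ x : S, x ≠ 0 → nle x a → ∃ z : S, z ≠ 0 ∧ nle z x ∧ nle z b) :
    ∀ x : S, x ≠ 0 → nle x (c * a) → ∃ z : S, z ≠ 0 ∧ nle z x ∧ nle z (c * b) := by
  intro x hx hxca
  have hx1 : c * (inv c * x) = x := by
    conv_lhs => rw [hxca]
    rw [show c * (inv c * (c * a * inv x * x)) = (c * inv c * c) * (a * inv x * x) by
      simp only [mul_assoc], mul_inv_mul,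
      show c * (a * inv x * x) = c * a * inv x * x by simp only [mul_assoc], ← hxca]
  have hicx0 : inv c * x ≠ 0 := fun h0 => hx (by rw [h0, mul_zero] at hx1; exact hx1.symm)
  have hicxa : nle (inv c * x) a := by
    have t1 : nle (inv c * x) (inv c * (c * a)) := nle_mul_left (inv c) hxca
    have t2 : nle (inv c * (c * a)) a := by
      simpa only [mul_assoc] using nle_mul_idem_left (d_idem c) a
    exact nle_trans t1 t2
  obtain ⟨z, hz0, hz1, hz2⟩ := h _ hicx0 hicxa
  have hzc : inv c * (c * z) = z := by
    conv_lhs => rw [hz1]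
    rw [show inv c * (c * (inv c * x * inv z * z)) = (inv c * c * inv c) * (x * inv z * z) by
      simp only [mul_assoc], inv_mul_inv,
      show inv c * (x * inv z * z) = inv c * x * inv z * z by simp only [mul_assoc], ← hz1]
  refine ⟨c * z, fun h0 => hz0 (by rw [h0, mul_zero] at hzc; exact hzc.symm), ?_,
    nle_mul_left c hz2⟩
  have t := nle_mul_left c hz1
  rwa [hx1] at t

theorem lenz_symm {a b : S} (h : lenz a b) : lenz b a := ⟨h.2, h.1⟩

theorem lenz_mul_right {a b : S} (h : lenz a b) (c : S) : lenz (a * c) (b * c) :=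
  ⟨half_mul_right c h.1, half_mul_right c h.2⟩

theorem lenz_mul_left {a b : S} (h : lenz a b) (c : S) : lenz (c * a) (c * b) :=
  ⟨half_mul_left c h.1, half_mul_left c h.2⟩

end InverseSemigroupWithZero

open InverseSemigroupWithZero in
/-- If the Lenz relation `≡` is idempotent-pure on `S`, then `a ≡ b` iff
there exists `c` with `c ≤_e a` and `c ≤_e b`. -/
theorem stmt_14 {S : Type*} [InverseSemigroupWithZero S]
    (hip : ∀ e a : S, e * e = e → lenz e a → a * a = a) (a b : S) :
    lenz a b ↔ ∃ c : S, essIn c a ∧ essIn c b := by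
  constructor
  · intro h
    have h1 : lenz (inv a * a) (inv a * b) := lenz_mul_left h (inv a)
    have idem1 : (inv a * b) * (inv a * b) = inv a * b := hip _ _ (d_idem a) h1
    have h2 : lenz (b * inv b) (a * inv b) := lenz_symm (lenz_mul_right h (inv b))
    have idem2 : (a * inv b) * (a * inv b) = a * inv b := hip _ _ (r_idem b) h2
    have hab : a * inv b = b * inv a := by
      have t := inv_idem idem2
      rw [mul_inv_rev', inv_inv'] at t
      exact t.symm
    have hca : nle (a * inv b * b) a := meet_nle_left a b
    have hcb : nle (a * inv b * b) b := by
      have e1 : a * inv b * b = b * (inv a * b) := by rw [hab, mul_assoc]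
      rw [e1]
      exact nle_mul_idem_right idem1 b
    refine ⟨a * inv b * b, ⟨hca, ?_⟩, ⟨hcb, ?_⟩⟩
    · intro x hx hxa
      obtain ⟨z, hz0, hzx, hzb⟩ := h.1 x hx hxa
      have hza : nle z a := nle_trans hzx hxa
      exact ne_zero_of_nle hz0 (meet_ge (meet_ge hza hzb) hzx)
    · intro y hy hyb
      obtain ⟨z, hz0, hzy, hza⟩ := h.2 y hy hyb
      have hzb : nle z b := nle_trans hzy hyb
      exact ne_zero_of_nle hz0 (meet_ge (meet_ge hza hzb) hzy)
  · rintro ⟨c, ⟨hca, hea⟩, ⟨hcb, heb⟩⟩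
    constructor
    · intro x hx hxa
      exact ⟨c * inv x * x, hea x hx hxa, meet_nle_right hca hxa,
        nle_trans (meet_nle_left c x) hcb⟩
    · intro y hy hyb
      exact ⟨c * inv y * y, heb y hy hyb, meet_nle_right hcb hyb,
        nle_trans (meet_nle_left c y) hca⟩
end

section
/- A subset of A* is a good subset if and only if it is a maximal filter. -/
/-- A good subset of `A*`: any two elements are prefix-comparable, and it
contains a string of every length. -/
def GoodSubset (n : ℕ) (C : Set (List (Fin n))) : Prop :=
  (∀ x ∈ C, ∀ y ∈ C, x <+: y ∨ y <+: x) ∧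
  ∀ m : ℕ, ∃ x ∈ C, x.length = m

/-- A filter in the free monoid `A*`. -/
def IsStringFilter (n : ℕ) (F : Set (List (Fin n))) : Prop :=
  F.Nonempty ∧
  (∀ x ∈ F, ∀ y ∈ F, ∃ u v : List (Fin n), x ++ u = y ++ v ∧ x ++ u ∈ F) ∧
  (∀ x ∈ F, ∀ y : List (Fin n), y <+: x → y ∈ F)

lemma prefix_of_prefix_len {α : Type*} {l₁ l₂ l₃ : List α}
    (h1 : l₁ <+: l₃) (h2 : l₂ <+: l₃) (h : l₁.length ≤ l₂.length) : l₁ <+: l₂ := by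
  rw [List.prefix_iff_eq_take] at h1 h2
  rw [h1, h2]
  simpa using (List.take_prefix_take_left h : List.take _ l₃ <+: List.take _ l₃)

/-- A subset of `A*` is a good subset if and only if it is a maximal filter. -/
theorem stmt_16 (n : ℕ) (hn : 2 ≤ n) (C : Set (List (Fin n))) :
    GoodSubset n C ↔
    (IsStringFilter n C ∧
      ∀ G : Set (List (Fin n)), IsStringFilter n G → C ⊆ G → G = C) := by
  constructor
  · rintro ⟨hcomp, hlen⟩
    -- C is closed under prefixes
    have hclosed : ∀ x ∈ C, ∀ y : List (Fin n), y <+: x → y ∈ C := by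
      intro x hx y hyx
      obtain ⟨z, hz, hzl⟩ := hlen y.length
      have hzy : z = y := by
        rcases hcomp z hz x hx with h | h
        · have : z <+: y := prefix_of_prefix_len h hyx (by omega)
          exact this.eq_of_length hzl
        · have : z <+: y :=
            prefix_of_prefix_len (List.prefix_refl z) (hyx.trans h) (by omega)
          exact this.eq_of_length hzl
      exact hzy ▸ hz
    have hfil : IsStringFilter n C := by
      refine ⟨?_, ?_, hclosed⟩
      · obtain ⟨x, hx, -⟩ := hlen 0; exact ⟨x, hx⟩
      · intro x hx y hy
        rcases hcomp x hx y hy with ⟨u, rfl⟩ | ⟨u, rfl⟩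
        · exact ⟨u, [], by simp, hy⟩
        · exact ⟨[], u, by simp, by simpa using hx⟩
    refine ⟨hfil, ?_⟩
    intro G hGf hCG
    obtain ⟨-, hGdir, -⟩ := hGf
    apply Set.Subset.antisymm _ hCG
    intro g hg
    obtain ⟨x, hx, hxl⟩ := hlen g.length
    obtain ⟨u, v, heq, -⟩ := hGdir g hg x (hCG hx)
    have hg1 : g <+: g ++ u := List.prefix_append g u
    have hx1 : x <+: g ++ u := heq ▸ List.prefix_append x v
    have : g <+: x := prefix_of_prefix_len hg1 hx1 (by omega)
    have : g = x := this.eq_of_length (by omega)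
    exact this ▸ hx
  · rintro ⟨⟨hne, hdir, hpre⟩, hmax⟩
    have hcomp : ∀ x ∈ C, ∀ y ∈ C, x <+: y ∨ y <+: x := by
      intro x hx y hy
      obtain ⟨u, v, heq, -⟩ := hdir x hx y hy
      have h1 : x <+: x ++ u := List.prefix_append x u
      have h2 : y <+: x ++ u := heq ▸ List.prefix_append y v
      rcases le_total x.length y.length with h | h
      · exact Or.inl (prefix_of_prefix_len h1 h2 h)
      · exact Or.inr (prefix_of_prefix_len h2 h1 h)
    refine ⟨hcomp, ?_⟩
    intro m
    by_cases hbig : ∃ x ∈ C, m ≤ x.length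
    · obtain ⟨x, hx, hmx⟩ := hbig
      exact ⟨x.take m, hpre x hx _ (List.take_prefix m x), by simp [hmx]⟩
    · push_neg at hbig
      exfalso
      -- lengths are bounded; take an element of maximal length
      set T : Set ℕ := (fun l : List (Fin n) => l.length) '' C with hT
      have hTne : T.Nonempty := hne.image _
      have hTbdd : BddAbove T := ⟨m, by rintro k ⟨y, hy, rfl⟩; exact (hbig y hy).le⟩
      obtain ⟨x, hx, hxl⟩ := Nat.sSup_mem hTne hTbdd
      have hxmax : ∀ y ∈ C, y.length ≤ x.length := by
        intro y hy
        rw [show x.length = sSup T from hxl]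
        exact le_csSup hTbdd ⟨y, hy, rfl⟩
      set a : Fin n := ⟨0, by omega⟩
      set G : Set (List (Fin n)) := {y | y <+: x ++ [a]} with hG
      have hGfil : IsStringFilter n G := by
        refine ⟨⟨[], List.nil_prefix⟩, ?_, ?_⟩
        · intro y hy z hz
          rcases le_total y.length z.length with h | h
          · obtain ⟨u, rfl⟩ := prefix_of_prefix_len hy hz h
            exact ⟨u, [], by simp, hz⟩
          · obtain ⟨u, rfl⟩ := prefix_of_prefix_len hz hy h
            exact ⟨[], u, by simp, by simpa using hy⟩
        · intro z hz y hyz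
          exact hyz.trans hz
      have hCG : C ⊆ G := by
        intro y hy
        have hy1 : y <+: x := by
          rcases hcomp y hy x hx with h | h
          · exact h
          · exact (h.eq_of_length (le_antisymm (h.length_le) (hxmax y hy))).symm ▸
              List.prefix_refl y
        exact hy1.trans (List.prefix_append x [a])
      have : G = C := hmax G hGfil hCG
      have hxa : x ++ [a] ∈ C := this ▸ List.prefix_refl (x ++ [a])
      have := hxmax _ hxa
      simp at this
end

section
/- A subset of A* is a good subset if and only if it is a tight filter. -/
/-- A tight cover of a string `a`: a finite set of strings extending `a` such
that every string extending `a` has a common right multiple with one of them. -/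
def TightCoverStr (n : ℕ) (a : List (Fin n)) (E : Finset (List (Fin n))) : Prop :=
  (∀ b ∈ E, a <+: b) ∧
  ∀ z : List (Fin n), a <+: z → ∃ b ∈ E, ∃ r s : List (Fin n), z ++ r = b ++ s

/-- A subset of `A*` is a good subset if and only if it is a tight filter. -/
theorem stmt_17 (n : ℕ) (hn : 2 ≤ n) (C : Set (List (Fin n))) :
    GoodSubset n C ↔
    (IsStringFilter n C ∧
      ∀ a ∈ C, ∀ E : Finset (List (Fin n)), TightCoverStr n a E →
        ∃ b ∈ E, b ∈ C) := by
  constructor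
  · rintro ⟨hcomp, hlen⟩
    have hpref : ∀ x ∈ C, ∀ y, y <+: x → y ∈ C := by
      intro x hx y hyx
      obtain ⟨w, hw, hwl⟩ := hlen y.length
      rcases hcomp w hw x hx with h | h
      · rcases List.prefix_or_prefix_of_prefix h hyx with h2 | h2
        · exact (h2.eq_of_length hwl) ▸ hw
        · exact (h2.eq_of_length hwl.symm).symm ▸ hw
      · have : y = x := hyx.eq_of_length
          (le_antisymm hyx.length_le (by have h1 := h.length_le; omega))
        exact this ▸ hx
    refine ⟨⟨⟨(hlen 0).choose, (hlen 0).choose_spec.1⟩, ?_, fun x hx y hyx => hpref x hx y hyx⟩, ?_⟩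
    · intro x hx y hy
      rcases hcomp x hx y hy with ⟨u, rfl⟩ | ⟨v, rfl⟩
      · exact ⟨u, [], by simp, hy⟩
      · exact ⟨[], v, by simp, by simpa using hx⟩
    · rintro a ha E ⟨hE1, hE2⟩
      obtain ⟨b0, hb0, -⟩ := hE2 a List.prefix_rfl
      set M := E.sup List.length with hM
      obtain ⟨x, hx, hxl⟩ := hlen M
      have haM : a.length ≤ M := le_trans (hE1 b0 hb0).length_le (Finset.le_sup hb0)
      have hax : a <+: x := by
        rcases hcomp a ha x hx with h | h
        · exact h
        · have hxa : x = a := h.eq_of_length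
            (le_antisymm h.length_le (by omega))
          exact hxa ▸ List.prefix_rfl
      obtain ⟨b, hb, r, s, hrs⟩ := hE2 x hax
      have hbl : b.length ≤ x.length := hxl ▸ Finset.le_sup hb
      have h1 : b <+: x ++ r := ⟨s, hrs.symm⟩
      have h2 : x <+: x ++ r := List.prefix_append x r
      have hbx : b <+: x := by
        rcases List.prefix_or_prefix_of_prefix h1 h2 with h | h
        · exact h
        · have : x = b := h.eq_of_length (le_antisymm h.length_le hbl)
          exact this ▸ List.prefix_rfl
      exact ⟨b, hb, hpref x hx b hbx⟩
  · rintro ⟨⟨hne, hcrm, hdown⟩, htight⟩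
    constructor
    · intro x hx y hy
      obtain ⟨u, v, huv, hmem⟩ := hcrm x hx y hy
      exact List.prefix_or_prefix_of_prefix (List.prefix_append x u) ⟨v, huv.symm⟩
    · intro m
      induction m with
      | zero =>
        obtain ⟨x, hx⟩ := hne
        exact ⟨[], hdown x hx [] List.nil_prefix, rfl⟩
      | succ m ih =>
        obtain ⟨a, ha, hal⟩ := ih
        have hn0 : 0 < n := by omega
        set E : Finset (List (Fin n)) := Finset.univ.image (fun c : Fin n => a ++ [c]) with hE
        have hcov : TightCoverStr n a E := by
          constructor
          · intro b hb
            simp only [hE, Finset.mem_image, Finset.mem_univ, true_and] at hb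
            obtain ⟨c, rfl⟩ := hb
            exact ⟨[c], rfl⟩
          · rintro z ⟨t, rfl⟩
            cases t with
            | nil =>
              refine ⟨a ++ [⟨0, hn0⟩], ?_, [⟨0, hn0⟩], [], by simp⟩
              simp [hE]
            | cons c t =>
              refine ⟨a ++ [c], ?_, [], t, by simp⟩
              simp [hE]
        obtain ⟨b, hb, hbC⟩ := htight a ha E hcov
        simp only [hE, Finset.mem_image, Finset.mem_univ, true_and] at hb
        obtain ⟨c, rfl⟩ := hb
        exact ⟨a ++ [c], hbC, by simp [hal]⟩
end

section
/- Let X and Y be finite subsets of A*. Then the following are equivalent: (a) for every z ∈ X·A* one has z·A* ∩ Y·A* ≠ ∅, and for every z ∈ Y·A* one has z·A* ∩ X·A* ≠ ∅; (b) X·A^ω = Y·A^ω. (Condition (a) expresses that the idempotents ⋁_{x∈X} xx⁻¹ and ⋁_{y∈Y} yy⁻¹ are identified by the Lenz congruence ≡ on the monoid M_n of surjective morphisms between finitely generated right ideals of A*.) -/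
/-- A finite string `x` is a prefix of the right-infinite string `w : ℕ → Fin n`. -/
def InfPrefix {n : ℕ} (x : List (Fin n)) (w : ℕ → Fin n) : Prop :=
  ∀ i : Fin x.length, w i.val = x.get i

lemma infPrefix_ofFn {n : ℕ} (w : ℕ → Fin n) (m : ℕ) :
    InfPrefix (List.ofFn (fun i : Fin m => w i)) w := by
  intro i
  simp [List.get_ofFn]

lemma infPrefix_of_prefix {n : ℕ} {x z : List (Fin n)} {w : ℕ → Fin n}
    (hxz : x <+: z) (hz : InfPrefix z w) : InfPrefix x w := by
  intro i
  have hlen : (i : ℕ) < z.length := lt_of_lt_of_le i.isLt hxz.length_le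
  have := hz ⟨i, hlen⟩
  simp only [List.get_eq_getElem] at this ⊢
  rw [this, hxz.getElem i.isLt]

lemma prefix_of_infPrefix_le {n : ℕ} {x z : List (Fin n)} {w : ℕ → Fin n}
    (hx : InfPrefix x w) (hz : InfPrefix z w) (h : x.length ≤ z.length) :
    x <+: z := by
  rw [List.prefix_iff_eq_take]
  apply List.ext_getElem
  · simp [h]
  · intro i h1 h2
    have hiz : i < z.length := lt_of_lt_of_le h1 h
    have e1 := hx ⟨i, h1⟩
    have e2 := hz ⟨i, hiz⟩
    simp only [List.get_eq_getElem] at e1 e2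
    simp [← e1, ← e2]

lemma subset_of_essential {n : ℕ} {X Y : Set (List (Fin n))} (hY : Y.Finite)
    (h : ∀ z ∈ {z : List (Fin n) | ∃ x ∈ X, x <+: z},
        ∃ w : List (Fin n), z <+: w ∧ ∃ y ∈ Y, y <+: w) :
    {w : ℕ → Fin n | ∃ x ∈ X, InfPrefix x w} ⊆
      {w : ℕ → Fin n | ∃ y ∈ Y, InfPrefix y w} := by
  intro w ⟨x, hxX, hxw⟩
  set L := max x.length (hY.toFinset.sup List.length) with hL
  set z := List.ofFn (fun i : Fin L => w i) with hzdef
  have hzw : InfPrefix z w := infPrefix_ofFn w L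
  have hzlen : z.length = L := by simp [hzdef]
  have hxz : x <+: z := prefix_of_infPrefix_le hxw hzw
    (by rw [hzlen]; exact le_max_left _ _)
  obtain ⟨w', hzw', y, hyY, hyw'⟩ := h z ⟨x, hxX, hxz⟩
  have hylen : y.length ≤ z.length := by
    rw [hzlen, hL]
    exact le_trans (Finset.le_sup (hY.mem_toFinset.mpr hyY)) (le_max_right _ _)
  have hyz : y <+: z := List.prefix_of_prefix_length_le hyw' hzw' hylen
  exact ⟨y, hyY, infPrefix_of_prefix hyz hzw⟩

lemma essential_of_subset {n : ℕ} (hn : 0 < n) {X Y : Set (List (Fin n))}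
    (h : {w : ℕ → Fin n | ∃ x ∈ X, InfPrefix x w} ⊆
      {w : ℕ → Fin n | ∃ y ∈ Y, InfPrefix y w}) :
    ∀ z ∈ {z : List (Fin n) | ∃ x ∈ X, x <+: z},
        ∃ w : List (Fin n), z <+: w ∧ ∃ y ∈ Y, y <+: w := by
  rintro z ⟨x, hxX, hxz⟩
  set w : ℕ → Fin n := fun i => if hi : i < z.length then z.get ⟨i, hi⟩ else ⟨0, hn⟩ with hw
  have hzw : InfPrefix z w := by
    intro i
    simp [hw, i.isLt]
  obtain ⟨y, hyY, hyw⟩ := h ⟨x, hxX, infPrefix_of_prefix hxz hzw⟩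
  set m := max z.length y.length with hm
  refine ⟨List.ofFn (fun i : Fin m => w i), ?_, y, hyY, ?_⟩
  · exact prefix_of_infPrefix_le hzw (infPrefix_ofFn w m)
      (by simp [hm])
  · exact prefix_of_infPrefix_le hyw (infPrefix_ofFn w m)
      (by simp [hm])

/-- For finite subsets `X, Y ⊆ A*`: the two right ideals `X·A*` and `Y·A*` are
mutually essential in each other (every principal right ideal inside one meets
the other) if and only if `X·A^ω = Y·A^ω`. -/
theorem stmt_18 (n : ℕ) (hn : 2 ≤ n) (X Y : Set (List (Fin n)))
    (hX : X.Finite) (hY : Y.Finite) :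
    ((∀ z ∈ {z : List (Fin n) | ∃ x ∈ X, x <+: z},
        ∃ w : List (Fin n), z <+: w ∧ ∃ y ∈ Y, y <+: w) ∧
     (∀ z ∈ {z : List (Fin n) | ∃ y ∈ Y, y <+: z},
        ∃ w : List (Fin n), z <+: w ∧ ∃ x ∈ X, x <+: w)) ↔
    {w : ℕ → Fin n | ∃ x ∈ X, InfPrefix x w} =
      {w : ℕ → Fin n | ∃ y ∈ Y, InfPrefix y w} := by
  have hn0 : 0 < n := by omega
  constructor
  · rintro ⟨h1, h2⟩
    exact Set.Subset.antisymm (subset_of_essential hY h1) (subset_of_essential hX h2)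
  · intro hEq
    constructor
    · exact essential_of_subset hn0 (le_of_eq hEq)
    · exact essential_of_subset hn0 (ge_of_eq hEq)
end
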